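/- Let 𝔪 be the real Lie subalgebra of d×d complex matrices generated by 𝔥 ∪ 𝔥'. Then for all 0 ≤ j < k ≤ d−1, both σ_x^{(jk)} = i(E_{jk} + E_{kj}) and σ_y^{(jk)} = E_{jk} − E_{kj} belong to 𝔪. -/

import Mathlib

open scoped Matrix

attribute [local instance 100] LieRing.ofAssociativeRing

/-- The d×d Fourier matrix V with entries V_{jk} = ω^{jk}/√d, ω = exp(2πi/d). -/
noncomputable def fourierV (d : ℕ) : Matrix (Fin d) (Fin d) ℂ :=
  Matrix.of fun j k =>
    Complex.exp (2 * Real.pi * Complex.I / d) ^ ((j : ℕ) * (k : ℕ)) / (Real.sqrt d : ℂ)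

/-- σ_x^{(jk)} = i(E_{jk} + E_{kj}). -/
noncomputable def sigmaX {d : ℕ} (j k : Fin d) : Matrix (Fin d) (Fin d) ℂ :=
  Complex.I • (Matrix.single j k 1 + Matrix.single k j 1)

/-- σ_y^{(jk)} = E_{jk} − E_{kj}. -/
def sigmaY {d : ℕ} (j k : Fin d) : Matrix (Fin d) (Fin d) ℂ :=
  Matrix.single j k 1 - Matrix.single k j 1

/-- 𝔥: the diagonal matrices diag(iα₀,…,iα_{d−1}) with real αⱼ. -/
def diagLie (d : ℕ) : Set (Matrix (Fin d) (Fin d) ℂ) :=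
  {A | ∃ α : Fin d → ℝ, A = Matrix.diagonal fun j => Complex.I * (α j : ℂ)}

/-- 𝔥' = V 𝔥 V⁻¹. -/
noncomputable def diagLieConj (d : ℕ) : Set (Matrix (Fin d) (Fin d) ℂ) :=
  {A | ∃ B ∈ diagLie d, A = fourierV d * B * (fourierV d)⁻¹}

section Aux

open Complex

/-- ω = exp(2πi/d). -/
noncomputable def omg (d : ℕ) : ℂ := Complex.exp (2 * Real.pi * Complex.I / d)

lemma omg_ne_zero (d : ℕ) : omg d ≠ 0 := Complex.exp_ne_zero _

lemma omg_pow_d (d : ℕ) [NeZero d] : omg d ^ d = 1 := by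
  rw [omg, ← Complex.exp_nat_mul, mul_div_cancel₀, Complex.exp_two_pi_mul_I]
  exact_mod_cast (NeZero.ne d)

lemma omg_pow_ne_one (d : ℕ) {n : ℕ} (h0 : 0 < n) (hn : n < d) : omg d ^ n ≠ 1 := by
  rw [omg, ← Complex.exp_nat_mul]
  intro h
  rw [Complex.exp_eq_one_iff] at h
  obtain ⟨m, hm⟩ := h
  have hd : (d : ℂ) ≠ 0 := by exact_mod_cast (Nat.pos_of_ne_zero (by omega)).ne'
  have hpi : (Real.pi : ℂ) ≠ 0 := by exact_mod_cast Real.pi_ne_zero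
  have h2 : (2 : ℂ) * Real.pi * I ≠ 0 := by simp [hpi, Complex.I_ne_zero]
  field_simp at hm
  have hc : (n : ℂ) = (m : ℂ) * d :=
    mul_right_cancel₀ h2 (by linear_combination (2 * Real.pi * I) * hm)
  have hz : (n : ℤ) = m * d := by exact_mod_cast hc
  have hdvd : d ∣ n := Int.ofNat_dvd.mp ⟨m, by linarith⟩
  have := Nat.le_of_dvd h0 hdvd
  omega

lemma conj_omg (d : ℕ) : (starRingEnd ℂ) (omg d) = (omg d)⁻¹ := by
  rw [omg, ← Complex.exp_conj, ← Complex.exp_neg]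
  congr 1
  have : (starRingEnd ℂ) (2 * Real.pi * Complex.I / d) = 2 * Real.pi * (-Complex.I) / d := by
    rw [map_div₀, map_mul, map_mul]
    simp [Complex.conj_I, Complex.conj_ofReal, map_ofNat]
  rw [this]; ring

/-- W = V⁻¹, with entries ω^{−jk}/√d. -/
noncomputable def fourierW (d : ℕ) : Matrix (Fin d) (Fin d) ℂ :=
  Matrix.of fun j k => ((omg d)⁻¹) ^ ((j : ℕ) * (k : ℕ)) / (Real.sqrt d : ℂ)

lemma sum_pow_eq_zero {d : ℕ} {ξ : ℂ} (hd : ξ ^ d = 1) (h1 : ξ ≠ 1) :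
    ∑ m : Fin d, ξ ^ (m : ℕ) = 0 := by
  rw [Fin.sum_univ_eq_sum_range (fun m => ξ ^ m), geom_sum_eq h1, hd]
  simp

lemma omg_pow_inj {d : ℕ} [NeZero d] {p q : Fin d}
    (h : omg d ^ (p : ℕ) = omg d ^ (q : ℕ)) : p = q := by
  rcases lt_trichotomy p q with hlt | heq | hlt
  · exfalso
    have h2 : omg d ^ ((q : ℕ) - (p : ℕ)) * omg d ^ (p : ℕ) = 1 * omg d ^ (p : ℕ) := by
      rw [← pow_add, one_mul, Nat.sub_add_cancel (le_of_lt hlt), h]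
    have := mul_right_cancel₀ (pow_ne_zero _ (omg_ne_zero d)) h2
    exact omg_pow_ne_one d (by omega) (by omega : (q : ℕ) - (p : ℕ) < d) this
  · exact heq
  · exfalso
    have h2 : omg d ^ ((p : ℕ) - (q : ℕ)) * omg d ^ (q : ℕ) = 1 * omg d ^ (q : ℕ) := by
      rw [← pow_add, one_mul, Nat.sub_add_cancel (le_of_lt hlt), ← h]
    have := mul_right_cancel₀ (pow_ne_zero _ (omg_ne_zero d)) h2
    exact omg_pow_ne_one d (by omega) (by omega : (p : ℕ) - (q : ℕ) < d) this

lemma sqrt_mul_self' (d : ℕ) : (Real.sqrt d : ℂ) * (Real.sqrt d : ℂ) = (d : ℂ) := by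
  rw [← Complex.ofReal_mul, Real.mul_self_sqrt (Nat.cast_nonneg d)]
  norm_cast

lemma xi_pow_d (d : ℕ) [NeZero d] (p q : Fin d) :
    (omg d ^ (p : ℕ) * ((omg d)⁻¹) ^ (q : ℕ)) ^ d = 1 := by
  rw [mul_pow, ← pow_mul, ← pow_mul, mul_comm (p : ℕ) d, mul_comm (q : ℕ) d,
    pow_mul, pow_mul, omg_pow_d, inv_pow, omg_pow_d]
  simp

lemma xi_eq_one_iff (d : ℕ) [NeZero d] (p q : Fin d) :
    omg d ^ (p : ℕ) * ((omg d)⁻¹) ^ (q : ℕ) = 1 ↔ p = q := by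
  constructor
  · intro h
    apply omg_pow_inj (d := d)
    have hq : ((omg d) ^ (q : ℕ)) ≠ 0 := pow_ne_zero _ (omg_ne_zero d)
    field_simp [inv_pow] at h
    rw [one_div, inv_pow, mul_inv_eq_one₀ hq] at h
    exact h
  · rintro rfl
    rw [inv_pow]
    exact mul_inv_cancel₀ (pow_ne_zero _ (omg_ne_zero d))

lemma V_mul_W (d : ℕ) [NeZero d] : fourierV d * fourierW d = 1 := by
  ext p q
  rw [Matrix.mul_apply]
  have key : ∀ m : Fin d, fourierV d p m * fourierW d m q
      = (omg d ^ (p : ℕ) * ((omg d)⁻¹) ^ (q : ℕ)) ^ (m : ℕ) / d := by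
    intro m
    show omg d ^ ((p : ℕ) * (m : ℕ)) / _ * (((omg d)⁻¹) ^ ((m : ℕ) * (q : ℕ)) / _) = _
    rw [pow_mul, pow_mul', mul_pow, ← sqrt_mul_self' d]
    have h0 : (Real.sqrt d : ℂ) ≠ 0 := by
      have : (0:ℝ) < Real.sqrt d := Real.sqrt_pos.mpr
        (by exact_mod_cast Nat.pos_of_ne_zero (NeZero.ne d))
      exact_mod_cast this.ne'
    field_simp
  rw [Finset.sum_congr rfl (fun m _ => key m), ← Finset.sum_div]
  by_cases h : p = q
  · subst h
    rw [(xi_eq_one_iff d p p).mpr rfl]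
    simp [Matrix.one_apply_eq, Finset.card_univ, (NeZero.ne d)]
  · rw [sum_pow_eq_zero (xi_pow_d d p q) (fun hc => h ((xi_eq_one_iff d p q).mp hc))]
    simp [Matrix.one_apply_ne h]

lemma fourierV_inv (d : ℕ) [NeZero d] : (fourierV d)⁻¹ = fourierW d :=
  Matrix.inv_eq_right_inv (V_mul_W d)

lemma conj_diag_apply (d : ℕ) [NeZero d] (β : Fin d → ℝ) (p q : Fin d) :
    (fourierV d * Matrix.diagonal (fun m => Complex.I * (β m : ℂ)) * fourierW d) p q
    = Complex.I / d *
        ∑ m : Fin d, (β m : ℂ) * (omg d ^ (p : ℕ) * ((omg d)⁻¹) ^ (q : ℕ)) ^ (m : ℕ) := by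
  rw [Matrix.mul_apply, Finset.mul_sum]
  refine Finset.sum_congr rfl fun m _ => ?_
  rw [Matrix.mul_diagonal]
  show omg d ^ ((p : ℕ) * (m : ℕ)) / _ * (Complex.I * (β m : ℂ)) *
      (((omg d)⁻¹) ^ ((m : ℕ) * (q : ℕ)) / _) = _
  rw [pow_mul, pow_mul', mul_pow]
  have h0 : (Real.sqrt d : ℂ) ≠ 0 := by
    have : (0:ℝ) < Real.sqrt d := Real.sqrt_pos.mpr
      (by exact_mod_cast Nat.pos_of_ne_zero (NeZero.ne d))
    exact_mod_cast this.ne'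
  have hd : (d : ℂ) ≠ 0 := by exact_mod_cast (NeZero.ne d)
  rw [← sqrt_mul_self' d]
  field_simp

/-- The generator diag(i·e_t). -/
noncomputable def Adiag (d : ℕ) (t : Fin d) : Matrix (Fin d) (Fin d) ℂ :=
  Matrix.diagonal (fun p => Complex.I * Complex.ofReal (if p = t then 1 else 0))

lemma diag_bracket {d : ℕ} (f : Fin d → ℂ) (M : Matrix (Fin d) (Fin d) ℂ) :
    ⁅Matrix.diagonal f, M⁆ = Matrix.of fun p q => (f p - f q) * M p q := by
  ext p q
  simp [Ring.lie_def, Matrix.sub_apply, Matrix.diagonal_mul, Matrix.mul_diagonal]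
  ring

lemma double_bracket {d : ℕ} (j k : Fin d) (hjk : j ≠ k)
    (M : Matrix (Fin d) (Fin d) ℂ) (h1 : M j k = Complex.I) (h2 : M k j = Complex.I) :
    ⁅Adiag d j, ⁅Adiag d k, M⁆⁆ = sigmaX j k := by
  rw [Adiag, Adiag, diag_bracket, diag_bracket]
  ext p q
  simp only [Matrix.of_apply, sigmaX, Matrix.smul_apply, Matrix.add_apply,
    Matrix.single, Matrix.of_apply, smul_eq_mul]
  by_cases hpj : p = j <;> by_cases hqk : q = k <;>
    by_cases hpk : p = k <;> by_cases hqj : q = j <;>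
    first
      | (exfalso; subst_vars; exact hjk rfl)
      | (subst_vars; (try simp only [h1, h2]); clear h1 h2;
         simp_all [eq_comm, Complex.I_mul_I] <;> ring_nf <;>
           simp [pow_succ, Complex.I_mul_I] <;> ring)

lemma sigmaY_eq {d : ℕ} (j k : Fin d) (hjk : j ≠ k) :
    sigmaY j k = -⁅Adiag d j, sigmaX j k⁆ := by
  rw [Adiag, diag_bracket]
  ext p q
  simp only [Matrix.of_apply, Matrix.neg_apply, sigmaX, sigmaY, Matrix.smul_apply,
    Matrix.add_apply, Matrix.sub_apply, Matrix.single, smul_eq_mul]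
  by_cases hpj : p = j <;> by_cases hqk : q = k <;>
    by_cases hpk : p = k <;> by_cases hqj : q = j <;>
    first
      | (exfalso; subst_vars; exact hjk rfl)
      | (subst_vars;
         simp_all [eq_comm, Complex.I_mul_I] <;> ring_nf <;>
           simp [pow_succ, Complex.I_mul_I] <;> ring)

lemma Adiag_mem (d : ℕ) (t : Fin d) : Adiag d t ∈ diagLie d :=
  ⟨fun p => if p = t then 1 else 0, by ext p q; rfl⟩

end Aux

open Complex in
/-- For all 0 ≤ j < k ≤ d−1, both σ_x^{(jk)} and σ_y^{(jk)} belong to the real Lie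
    subalgebra 𝔪 generated by 𝔥 ∪ 𝔥'. -/
theorem sigmaX_sigmaY_mem_lieSpan (d : ℕ) [NeZero d] (j k : Fin d) (hjk : j < k) :
    sigmaX j k ∈
      LieSubalgebra.lieSpan ℝ (Matrix (Fin d) (Fin d) ℂ) (diagLie d ∪ diagLieConj d) ∧
    sigmaY j k ∈
      LieSubalgebra.lieSpan ℝ (Matrix (Fin d) (Fin d) ℂ) (diagLie d ∪ diagLieConj d) := by
  have hne : j ≠ k := hjk.ne
  have hd : (d : ℂ) ≠ 0 := by exact_mod_cast (NeZero.ne d)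
  set S := LieSubalgebra.lieSpan ℝ (Matrix (Fin d) (Fin d) ℂ) (diagLie d ∪ diagLieConj d)
  -- the root of unity ζ = ω^j ω^{-k}
  set ζ : ℂ := omg d ^ (j : ℕ) * ((omg d)⁻¹) ^ (k : ℕ) with hζdef
  set ζ' : ℂ := omg d ^ (k : ℕ) * ((omg d)⁻¹) ^ (j : ℕ) with hζ'def
  have hζd : ζ ^ d = 1 := xi_pow_d d j k
  have hζ'd : ζ' ^ d = 1 := xi_pow_d d k j
  have hζ1 : ζ ≠ 1 := fun h => hne ((xi_eq_one_iff d j k).mp h)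
  have hmul : ζ * ζ' = 1 := by
    rw [hζdef, hζ'def, inv_pow, inv_pow]
    field_simp [pow_ne_zero _ (omg_ne_zero d)]
  have hconj : (starRingEnd ℂ) ζ = ζ' := by
    rw [hζdef, hζ'def, map_mul, map_pow, map_pow, conj_omg, map_inv₀, conj_omg, inv_inv]
    ring
  -- choose real coefficients β with ∑ β_m ζ^m = d and ∑ β_m ζ'^m = d
  obtain ⟨β, hS1, hS2⟩ :
      ∃ β : Fin d → ℝ, (∑ m : Fin d, (β m : ℂ) * ζ ^ (m : ℕ)) = d ∧
        (∑ m : Fin d, (β m : ℂ) * ζ' ^ (m : ℕ)) = d := by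
    by_cases hsq : ζ * ζ = 1
    · -- ζ = −1, so also ζ' = −1
      have hζneg : ζ = -1 := ((mul_self_eq_one_iff).mp hsq).resolve_left hζ1
      have hζ'neg : ζ' = -1 := by
        linear_combination -hmul + ζ' * hζneg
      refine ⟨fun m => (-1 : ℝ) ^ (m : ℕ), ?_, ?_⟩
      · have hterm : ∀ m : Fin d, ((((-1:ℝ) ^ (m : ℕ) : ℝ)) : ℂ) * ζ ^ (m : ℕ) = 1 := by
          intro m
          rw [hζneg]; push_cast; rw [← mul_pow]; norm_num
        rw [Finset.sum_congr rfl fun m _ => hterm m]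
        simp [Finset.card_univ]
      · have hterm : ∀ m : Fin d, ((((-1:ℝ) ^ (m : ℕ) : ℝ)) : ℂ) * ζ' ^ (m : ℕ) = 1 := by
          intro m
          rw [hζ'neg]; push_cast; rw [← mul_pow]; norm_num
        rw [Finset.sum_congr rfl fun m _ => hterm m]
        simp [Finset.card_univ]
    · -- generic case: β_m = 2 Re(ζ^m)
      have hsq' : ζ' * ζ' ≠ 1 := by
        intro h
        apply hsq
        have key : ζ * ζ * (ζ' * ζ') = 1 := by linear_combination (ζ * ζ' + 1) * hmul
        rw [h, mul_one] at key
        exact key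
      have hβ : ∀ m : Fin d, (((2 * (ζ ^ (m : ℕ)).re : ℝ)) : ℂ)
          = ζ ^ (m : ℕ) + ζ' ^ (m : ℕ) := by
        intro m
        rw [← hconj, ← map_pow, Complex.add_conj]
      refine ⟨fun m => 2 * (ζ ^ (m : ℕ)).re, ?_, ?_⟩
      · have hterm : ∀ m : Fin d, (((2 * (ζ ^ (m : ℕ)).re : ℝ)) : ℂ) * ζ ^ (m : ℕ)
            = (ζ * ζ) ^ (m : ℕ) + 1 := by
          intro m
          rw [hβ m, mul_pow]
          have h1 : ζ' ^ (m : ℕ) * ζ ^ (m : ℕ) = 1 := by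
            rw [← mul_pow, mul_comm ζ' ζ, hmul, one_pow]
          linear_combination h1
        rw [Finset.sum_congr rfl fun m _ => hterm m, Finset.sum_add_distrib,
          sum_pow_eq_zero (by rw [mul_pow, hζd, one_mul]) hsq]
        simp [Finset.card_univ]
      · have hterm : ∀ m : Fin d, (((2 * (ζ ^ (m : ℕ)).re : ℝ)) : ℂ) * ζ' ^ (m : ℕ)
            = (ζ' * ζ') ^ (m : ℕ) + 1 := by
          intro m
          rw [hβ m, mul_pow]
          have h1 : ζ ^ (m : ℕ) * ζ' ^ (m : ℕ) = 1 := by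
            rw [← mul_pow, hmul, one_pow]
          linear_combination h1
        rw [Finset.sum_congr rfl fun m _ => hterm m, Finset.sum_add_distrib,
          sum_pow_eq_zero (by rw [mul_pow, hζ'd, one_mul]) hsq']
        simp [Finset.card_univ]
  -- the conjugated diagonal matrix B
  set D : Matrix (Fin d) (Fin d) ℂ := Matrix.diagonal (fun m => Complex.I * (β m : ℂ)) with hD
  set B : Matrix (Fin d) (Fin d) ℂ := fourierV d * D * (fourierV d)⁻¹ with hB
  have hBjk : B j k = Complex.I := by
    rw [hB, fourierV_inv, conj_diag_apply d β j k, ← hζdef, hS1]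
    field_simp
  have hBkj : B k j = Complex.I := by
    rw [hB, fourierV_inv, conj_diag_apply d β k j, ← hζ'def, hS2]
    field_simp
  have hBmem : B ∈ S :=
    LieSubalgebra.subset_lieSpan (Set.mem_union_right _ ⟨D, ⟨β, rfl⟩, rfl⟩)
  have hAj : Adiag d j ∈ S :=
    LieSubalgebra.subset_lieSpan (Set.mem_union_left _ (Adiag_mem d j))
  have hAk : Adiag d k ∈ S :=
    LieSubalgebra.subset_lieSpan (Set.mem_union_left _ (Adiag_mem d k))
  have hX : sigmaX j k ∈ S := by
    rw [← double_bracket j k hne B hBjk hBkj]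
    exact S.lie_mem hAj (S.lie_mem hAk hBmem)
  refine ⟨hX, ?_⟩
  rw [sigmaY_eq j k hne]
  exact neg_mem (S.lie_mem hAj hX)
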